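/- Let X be a centered κ²-sub-Gaussian random variable with variance σ² sampled n times, with c = (e−1)/(2e(2e−1)), and T ≥ 2 an integer. If n = ⌈(72κ⁴/(cσ⁴)) log(2T)⌉, then with probability at least 1 − 1/T², the empirical variance σ̂_n² satisfies |σ̂_n² − σ²| ≤ σ²/2, and hence σ²/2 ≤ σ̂_n² ≤ 3σ²/2. -/

import Mathlib

open MeasureTheory ProbabilityTheory Real Set

-- from p2
lemma int_exp_Ioi {r : ℝ} (hr : 0 < r) : ∫ t in Ioi (0:ℝ), exp (-(r*t)) = 1/r := by
  have h := integral_rpow_mul_exp_neg_mul_Ioi (a := 1) (r := r) one_pos hr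
  simp only [sub_self, Real.rpow_zero, one_mul, Real.rpow_one, Real.Gamma_one, mul_one] at h
  exact h

lemma int_t_exp_Ioi {r : ℝ} (hr : 0 < r) : ∫ t in Ioi (0:ℝ), t * exp (-(r*t)) = (1/r)^2 := by
  have h := integral_rpow_mul_exp_neg_mul_Ioi (a := 2) (r := r) two_pos hr
  rw [Real.Gamma_two, mul_one] at h
  rw [show ((1:ℝ)/r)^(2:ℕ) = (1/r)^((2:ℝ)) by rw [← Real.rpow_natCast]; norm_num, ← h]
  refine setIntegral_congr_fun measurableSet_Ioi (fun t ht => ?_)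
  norm_num

lemma integrableOn_t_exp {r : ℝ} (hr : 0 < r) :
    IntegrableOn (fun t : ℝ => t * exp (-(r*t))) (Ioi 0) := by
  have hi : IntegrableOn (fun t : ℝ => (2/r) * exp (-(r/2) * t)) (Ioi 0) :=
    (exp_neg_integrableOn_Ioi 0 (by positivity)).const_mul _
  refine Integrable.mono' hi ?_ ?_
  · exact (continuous_id.mul ((continuous_const.mul continuous_id).neg.rexp)).aestronglyMeasurable
  · filter_upwards [self_mem_ae_restrict measurableSet_Ioi] with t ht
    simp only [mem_Ioi] at ht
    rw [Real.norm_eq_abs, abs_of_nonneg (by positivity)]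
    have h1 : t ≤ (2/r) * exp (r/2*t) := by
      have := add_one_le_exp (r/2*t)
      have h2 : r/2*t ≤ exp (r/2*t) := by linarith
      calc t = (2/r) * (r/2*t) := by field_simp
        _ ≤ (2/r) * exp (r/2*t) := by
            apply mul_le_mul_of_nonneg_left h2 (by positivity)
    calc t * exp (-(r*t)) ≤ ((2/r) * exp (r/2*t)) * exp (-(r*t)) := by
          apply mul_le_mul_of_nonneg_right h1 (exp_nonneg _)
      _ = (2/r) * exp (-(r/2)*t) := by rw [mul_assoc, ← exp_add]; ring_nf

lemma integrableOn_exp_Ioi' {r : ℝ} (hr : 0 < r) :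
    IntegrableOn (fun t : ℝ => exp (-(r*t))) (Ioi 0) := by
  have := exp_neg_integrableOn_Ioi 0 hr
  refine this.congr_fun (fun t _ => by simp only [neg_mul]) measurableSet_Ioi

section aux
variable {Ω : Type*} {mΩ : MeasurableSpace Ω} {μ : Measure Ω} [IsProbabilityMeasure μ]
variable {X0 : Ω → ℝ} {b : ℝ}

/-- fourth moment bound from subgaussian tails -/
lemma moment4 (hm0 : Measurable X0) (hb : 0 < b)
    (htail : ∀ t : ℝ, 0 ≤ t → μ {ω | t ≤ X0 ω ^ 2} ≤ ENNReal.ofReal (2 * exp (-(t/(2*b))))) :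
    Integrable (fun ω => (X0 ω^2)^2) μ ∧ ∫ ω, (X0 ω^2)^2 ∂μ ≤ 16*b^2 := by
  have hG : ∀ y:ℝ, (∫ t in (0:ℝ)..y, 2*t) = y^2 := by
    intro y
    rw [intervalIntegral.integral_const_mul, integral_id]
    ring
  have hβ : (0:ℝ) < 1/(2*b) := by positivity
  have hlint : ∫⁻ ω, ENNReal.ofReal ((X0 ω^2)^2) ∂μ ≤ ENNReal.ofReal (16*b^2) := by
    have hlc := lintegral_comp_eq_lintegral_meas_le_mul μ (f := fun ω => X0 ω^2)
      (g := fun t => 2*t)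
      (Filter.Eventually.of_forall (fun ω => sq_nonneg _)) (hm0.pow_const 2).aemeasurable
      (fun t ht => (continuous_const.mul continuous_id).intervalIntegrable _ _)
      (by filter_upwards [self_mem_ae_restrict measurableSet_Ioi] with t ht
          simp only [mem_Ioi] at ht; linarith)
    calc ∫⁻ ω, ENNReal.ofReal ((X0 ω^2)^2) ∂μ
        = ∫⁻ ω, ENNReal.ofReal (∫ t in (0:ℝ)..(X0 ω^2), 2*t) ∂μ := by
          apply lintegral_congr; intro ω; rw [hG]
      _ = ∫⁻ t in Ioi (0:ℝ), μ {a | t ≤ X0 a ^ 2} * ENNReal.ofReal (2*t) := hlc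
      _ ≤ ∫⁻ t in Ioi (0:ℝ), ENNReal.ofReal ((2 * exp (-(t/(2*b)))) * (2*t)) := by
          apply setLIntegral_mono
          · exact (ENNReal.measurable_ofReal.comp
              (((continuous_const.mul ((continuous_id.div_const _).neg.rexp)).mul
                (continuous_const.mul continuous_id)).measurable))
          · intro t ht
            refine le_trans (mul_le_mul_left (htail t (le_of_lt ht)) _) ?_
            rw [← ENNReal.ofReal_mul (by positivity)]
      _ = ENNReal.ofReal (∫ t in Ioi (0:ℝ), (2 * exp (-(t/(2*b)))) * (2*t)) := by
          rw [ofReal_integral_eq_lintegral_ofReal]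
          · refine Integrable.congr ((integrableOn_t_exp hβ).const_mul 4) ?_
            filter_upwards [self_mem_ae_restrict measurableSet_Ioi] with t ht
            rw [show -(1/(2*b)*t) = -(t/(2*b)) by ring]
            ring
          · filter_upwards [self_mem_ae_restrict measurableSet_Ioi] with t ht
            simp only [mem_Ioi] at ht
            positivity
      _ ≤ ENNReal.ofReal (16*b^2) := by
          apply ENNReal.ofReal_le_ofReal
          have heq : ∫ t in Ioi (0:ℝ), (2 * exp (-(t/(2*b)))) * (2*t)
              = 4 * ∫ t in Ioi (0:ℝ), t * exp (-(1/(2*b)*t)) := by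
            rw [← integral_const_mul]
            refine setIntegral_congr_fun measurableSet_Ioi (fun t ht => ?_)
            rw [show -(1/(2*b)*t) = -(t/(2*b)) by ring]
            ring
          rw [heq, int_t_exp_Ioi hβ]
          rw [one_div_one_div]
          nlinarith
  have hmeas : AEStronglyMeasurable (fun ω => (X0 ω^2)^2) μ :=
    ((hm0.pow_const 2).pow_const 2).aestronglyMeasurable
  have hint : Integrable (fun ω => (X0 ω^2)^2) μ := by
    refine ⟨hmeas, ?_⟩
    rw [hasFiniteIntegral_iff_ofReal (Filter.Eventually.of_forall (fun ω => by positivity))]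
    exact lt_of_le_of_lt hlint ENNReal.ofReal_lt_top
  refine ⟨hint, ?_⟩
  rw [integral_eq_lintegral_of_nonneg_ae (Filter.Eventually.of_forall (fun ω => by positivity))
    hmeas]
  calc (∫⁻ ω, ENNReal.ofReal ((X0 ω^2)^2) ∂μ).toReal
      ≤ (ENNReal.ofReal (16*b^2)).toReal := ENNReal.toReal_mono ENNReal.ofReal_ne_top hlint
    _ = 16*b^2 := ENNReal.toReal_ofReal (by positivity)

end aux

section aux2
variable {Ω : Type*} {mΩ : MeasurableSpace Ω} {μ : Measure Ω} [IsProbabilityMeasure μ]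
variable {X0 : Ω → ℝ} {b : ℝ}





lemma pw_exp_neg_le {z : ℝ} (hz : 0 ≤ z) : exp (-z) ≤ 1 - z + z^2/2 := by
  have h1 : 1 + z + z^2/2 ≤ exp z := quadratic_le_exp_of_nonneg hz
  have h2 : (0:ℝ) < 1 + z + z^2/2 := by nlinarith
  have h3 : (0:ℝ) < 1 - z + z^2/2 := by nlinarith
  rw [exp_neg]
  rw [inv_le_iff_one_le_mul₀ (lt_of_lt_of_le h2 h1)]
  nlinarith [exp_pos z]

lemma pw_cosh (y : ℝ) : 2 + y^2/2 ≤ exp y + exp (-y) := by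
  rcases le_total 0 y with hy | hy
  · have h1 := quadratic_le_exp_of_nonneg hy
    have h2 := add_one_le_exp (-y)
    nlinarith
  · have hy' : 0 ≤ -y := by linarith
    have h1 := quadratic_le_exp_of_nonneg hy'
    have h2 := add_one_le_exp y
    nlinarith

lemma tail_one (hb : 0 < b)
    (hsg : ∀ l : ℝ, Integrable (fun ω => exp (l * X0 ω)) μ ∧
      ∫ ω, exp (l * X0 ω) ∂μ ≤ exp (l ^ 2 * b / 2))
    {u : ℝ} (hu : 0 ≤ u) : μ {ω | u ≤ X0 ω} ≤ ENNReal.ofReal (exp (-(u^2/(2*b)))) := by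
  have ht : (0:ℝ) ≤ u / b := by positivity
  have h := measure_ge_le_exp_mul_mgf (μ := μ) (X := X0) u ht (hsg (u/b)).1
  have hmgf : mgf X0 μ (u/b) ≤ exp ((u/b)^2 * b/2) := (hsg (u/b)).2
  rw [ENNReal.le_ofReal_iff_toReal_le (measure_ne_top μ _) (exp_nonneg _)]
  calc (μ {ω | u ≤ X0 ω}).toReal ≤ exp (-(u/b) * u) * mgf X0 μ (u/b) := h
    _ ≤ exp (-(u/b)*u) * exp ((u/b)^2 * b/2) := by
        exact mul_le_mul_of_nonneg_left hmgf (exp_nonneg _)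
    _ = exp (-(u^2/(2*b))) := by rw [← exp_add]; congr 1; field_simp; ring

lemma hsg_neg (hsg : ∀ l : ℝ, Integrable (fun ω => exp (l * X0 ω)) μ ∧
      ∫ ω, exp (l * X0 ω) ∂μ ≤ exp (l ^ 2 * b / 2)) :
    ∀ l : ℝ, Integrable (fun ω => exp (l * (-X0) ω)) μ ∧
      ∫ ω, exp (l * (-X0) ω) ∂μ ≤ exp (l ^ 2 * b / 2) := by
  intro l
  have h := hsg (-l)
  have he : (fun ω => exp (l * (-X0) ω)) = fun ω => exp ((-l) * X0 ω) := by
    funext ω; simp [neg_mul, mul_neg]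
  constructor
  · rw [he]; exact h.1
  · calc ∫ ω, exp (l * (-X0) ω) ∂μ = ∫ ω, exp ((-l) * X0 ω) ∂μ := by rw [← he]
      _ ≤ exp ((-l)^2 * b / 2) := h.2
      _ = exp (l^2 * b / 2) := by ring_nf

lemma tail_sq (hb : 0 < b)
    (hsg : ∀ l : ℝ, Integrable (fun ω => exp (l * X0 ω)) μ ∧
      ∫ ω, exp (l * X0 ω) ∂μ ≤ exp (l ^ 2 * b / 2))
    {t : ℝ} (ht : 0 ≤ t) :
    μ {ω | t ≤ X0 ω ^ 2} ≤ ENNReal.ofReal (2 * exp (-(t/(2*b)))) := by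
  have hsub : {ω | t ≤ X0 ω ^ 2} ⊆ {ω | Real.sqrt t ≤ X0 ω} ∪ {ω | Real.sqrt t ≤ (-X0) ω} := by
    intro ω hω
    simp only [Set.mem_setOf_eq] at hω
    have : Real.sqrt t ≤ |X0 ω| := by
      rw [← Real.sqrt_sq_eq_abs]
      exact Real.sqrt_le_sqrt hω
    rcases abs_cases (X0 ω) with ⟨h1, _⟩ | ⟨h1, _⟩
    · left; simp only [Set.mem_setOf_eq]; linarith
    · right; simp only [Set.mem_setOf_eq, Pi.neg_apply]; linarith
  calc μ {ω | t ≤ X0 ω ^ 2} ≤ μ ({ω | Real.sqrt t ≤ X0 ω} ∪ {ω | Real.sqrt t ≤ (-X0) ω}) :=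
        measure_mono hsub
    _ ≤ μ {ω | Real.sqrt t ≤ X0 ω} + μ {ω | Real.sqrt t ≤ (-X0) ω} := measure_union_le _ _
    _ ≤ ENNReal.ofReal (exp (-(Real.sqrt t ^2/(2*b)))) +
        ENNReal.ofReal (exp (-(Real.sqrt t ^2/(2*b)))) := by
        gcongr
        · exact tail_one hb hsg (Real.sqrt_nonneg t)
        · exact tail_one hb (hsg_neg hsg) (Real.sqrt_nonneg t)
    _ = ENNReal.ofReal (2 * exp (-(t/(2*b)))) := by
        rw [← ENNReal.ofReal_add (exp_nonneg _) (exp_nonneg _), Real.sq_sqrt ht]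
        ring_nf

end aux2



section aux3
variable {Ω : Type*} {mΩ : MeasurableSpace Ω} {μ : Measure Ω} [IsProbabilityMeasure μ]
variable {X0 : Ω → ℝ} {b : ℝ}

lemma exp_sq_upper (hm0 : Measurable X0) (hb : 0 < b)
    (htail : ∀ t : ℝ, 0 ≤ t → μ {ω | t ≤ X0 ω ^ 2} ≤ ENNReal.ofReal (2 * exp (-(t/(2*b)))))
    (hint2 : Integrable (fun ω => X0 ω^2) μ)
    {s : ℝ} (hs : 0 < s) (hs4 : s ≤ 1/(4*b)) :
    Integrable (fun ω => exp (s * X0 ω^2)) μ ∧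
    ∫ ω, exp (s * X0 ω^2) ∂μ ≤ 1 + s * (∫ ω, X0 ω^2 ∂μ) + 16*s^2*b^2 := by
  have hβ : (0:ℝ) < 1/(2*b) := by positivity
  have hdiff : 1/(2*b) - 1/(4*b) = 1/(4*b) := by field_simp; ring
  have hd : 1/(4*b) ≤ 1/(2*b) - s := by linarith
  have hβs : 0 < 1/(2*b) - s := lt_of_lt_of_le (by positivity) hd
  have hG : ∀ y:ℝ, (∫ t in (0:ℝ)..y, (s*exp (s*t) - s)) = exp (s*y) - s*y - 1 := by
    intro y
    have hder : ∀ x ∈ uIcc (0:ℝ) y, HasDerivAt (fun u => exp (s*u) - s*u) (s*exp (s*x) - s) x := by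
      intro x _
      have h1 : HasDerivAt (fun u:ℝ => s*u) s x := by simpa using (hasDerivAt_id x).const_mul s
      have h2 := h1.exp
      have h3 := h2.sub h1
      exact h3.congr_deriv (by ring)
    rw [intervalIntegral.integral_eq_sub_of_hasDerivAt hder
      (((continuous_const.mul ((continuous_const.mul continuous_id).rexp)).sub
        continuous_const).intervalIntegrable _ _)]
    simp
  have hGnn : ∀ y:ℝ, 0 ≤ exp (s*y) - s*y - 1 := by
    intro y; have := add_one_le_exp (s*y); linarith
  have hGmeas : AEStronglyMeasurable (fun ω => exp (s * X0 ω^2) - s*X0 ω^2 - 1) μ :=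
    ((((hm0.pow_const 2).const_mul s).exp.sub ((hm0.pow_const 2).const_mul s)).sub
      measurable_const).aestronglyMeasurable
  have hlint : ∫⁻ ω, ENNReal.ofReal (exp (s * X0 ω^2) - s*X0 ω^2 - 1) ∂μ
      ≤ ENNReal.ofReal (16*s^2*b^2) := by
    have hlc := lintegral_comp_eq_lintegral_meas_le_mul μ (f := fun ω => X0 ω^2)
      (g := fun t => s*exp (s*t) - s)
      (Filter.Eventually.of_forall (fun ω => sq_nonneg _)) (hm0.pow_const 2).aemeasurable
      (fun t ht => ((continuous_const.mul ((continuous_const.mul continuous_id).rexp)).sub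
        continuous_const).intervalIntegrable _ _)
      (by filter_upwards [self_mem_ae_restrict measurableSet_Ioi] with t ht
          simp only [mem_Ioi] at ht
          have h1 : s*t + 1 ≤ exp (s*t) := add_one_le_exp _
          have h2 : (1:ℝ) ≤ exp (s*t) := by nlinarith
          nlinarith [mul_le_mul_of_nonneg_left h2 hs.le])
    calc ∫⁻ ω, ENNReal.ofReal (exp (s * X0 ω^2) - s*X0 ω^2 - 1) ∂μ
        = ∫⁻ ω, ENNReal.ofReal (∫ t in (0:ℝ)..(X0 ω^2), (s*exp (s*t) - s)) ∂μ := by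
          apply lintegral_congr; intro ω; rw [hG]
      _ = ∫⁻ t in Ioi (0:ℝ), μ {a | t ≤ X0 a ^ 2} * ENNReal.ofReal (s*exp (s*t) - s) := hlc
      _ ≤ ∫⁻ t in Ioi (0:ℝ), ENNReal.ofReal ((2 * exp (-(t/(2*b)))) * (s*exp (s*t) - s)) := by
          apply setLIntegral_mono
          · exact (ENNReal.measurable_ofReal.comp
              (((continuous_const.mul ((continuous_id.div_const _).neg.rexp)).mul
                ((continuous_const.mul ((continuous_const.mul continuous_id).rexp)).sub
                  continuous_const)).measurable))
          · intro t ht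
            refine le_trans (mul_le_mul_left (htail t (le_of_lt ht)) _) ?_
            rw [← ENNReal.ofReal_mul (by positivity)]
      _ = ENNReal.ofReal (∫ t in Ioi (0:ℝ), (2 * exp (-(t/(2*b)))) * (s*exp (s*t) - s)) := by
          rw [ofReal_integral_eq_lintegral_ofReal]
          · refine Integrable.congr (((integrableOn_exp_Ioi' hβs).const_mul (2*s)).sub
              ((integrableOn_exp_Ioi' hβ).const_mul (2*s))) ?_
            filter_upwards [self_mem_ae_restrict measurableSet_Ioi] with t ht
            show (2*s) * exp (-((1/(2*b) - s)*t)) - (2*s) * exp (-(1/(2*b)*t))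
                = (2 * exp (-(t/(2*b)))) * (s*exp (s*t) - s)
            rw [show -((1/(2*b) - s)*t) = s*t + -(1/(2*b)*t) by ring, exp_add,
              show -(1/(2*b)*t) = -(t/(2*b)) by ring]
            ring
          · filter_upwards [self_mem_ae_restrict measurableSet_Ioi] with t ht
            simp only [mem_Ioi] at ht
            have h1 : s*t + 1 ≤ exp (s*t) := add_one_le_exp _
            have h2 : (1:ℝ) ≤ exp (s*t) := by nlinarith
            have h3 : 0 ≤ s*exp (s*t) - s := by nlinarith [mul_le_mul_of_nonneg_left h2 hs.le]
            have h4 : 0 ≤ 2 * exp (-(t/(2*b))) := by positivity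
            exact mul_nonneg h4 h3
      _ ≤ ENNReal.ofReal (16*s^2*b^2) := by
          apply ENNReal.ofReal_le_ofReal
          have heq : ∫ t in Ioi (0:ℝ), (2 * exp (-(t/(2*b)))) * (s*exp (s*t) - s)
              = (2*s) * (1/(1/(2*b) - s)) - (2*s) * (1/(1/(2*b))) := by
            rw [show ∫ t in Ioi (0:ℝ), (2 * exp (-(t/(2*b)))) * (s*exp (s*t) - s)
                = ∫ t in Ioi (0:ℝ), ((2*s) * exp (-((1/(2*b) - s)*t)) -
                    (2*s) * exp (-(1/(2*b)*t))) from
              setIntegral_congr_fun measurableSet_Ioi (fun t ht => by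
                rw [show -((1/(2*b) - s)*t) = s*t + -(1/(2*b)*t) by ring, exp_add,
                  show -(1/(2*b)*t) = -(t/(2*b)) by ring]
                ring)]
            rw [integral_sub (((integrableOn_exp_Ioi' hβs).const_mul (2*s)))
              (((integrableOn_exp_Ioi' hβ).const_mul (2*s))), integral_const_mul,
              integral_const_mul, int_exp_Ioi hβs, int_exp_Ioi hβ]
          rw [heq, one_div_one_div]
          have h1 : 1/(1/(2*b) - s) ≤ 4*b := by
            rw [show (4:ℝ)*b = 1/(1/(4*b)) by rw [one_div_one_div]]
            exact one_div_le_one_div_of_le (by positivity) hd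
          have hslt : s < 1/(2*b) := by linarith
          have hs2b : s * (2*b) < 1 := (lt_div_iff₀ (by positivity)).mp hslt
          have hne : (0:ℝ) < 1 - s*b*2 := by nlinarith
          have hval : (2*s) * (1/(1/(2*b) - s)) - (2*s) * (2*b)
              = (4*s^2*b) * (1/(1/(2*b) - s)) := by
            rw [show 1/(2*b) - s = (1 - s*b*2)/(2*b) by field_simp]
            rw [one_div_div]
            simp only [div_eq_mul_inv]
            linear_combination (4*s*b) * (mul_inv_cancel₀ hne.ne')
          rw [hval]
          have h2 := mul_le_mul_of_nonneg_left h1 (show (0:ℝ) ≤ 4*s^2*b by positivity)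
          nlinarith [h2]
  have hGint : Integrable (fun ω => exp (s * X0 ω^2) - s*X0 ω^2 - 1) μ := by
    refine ⟨hGmeas, ?_⟩
    rw [hasFiniteIntegral_iff_ofReal (Filter.Eventually.of_forall (fun ω => hGnn _))]
    exact lt_of_le_of_lt hlint ENNReal.ofReal_lt_top
  have hdecomp : (fun ω => exp (s * X0 ω^2))
      = fun ω => (exp (s * X0 ω^2) - s*X0 ω^2 - 1) + (s * X0 ω^2 + 1) := by
    funext ω; ring
  have hg1 : Integrable (fun ω => s * X0 ω^2 + 1) μ := by
    simpa using (hint2.const_mul s).add (integrable_const 1)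
  have hint' : Integrable (fun ω => exp (s * X0 ω^2)) μ := by
    rw [hdecomp]
    exact hGint.add hg1
  refine ⟨hint', ?_⟩
  have hGle : ∫ ω, (exp (s * X0 ω^2) - s*X0 ω^2 - 1) ∂μ ≤ 16*s^2*b^2 := by
    rw [integral_eq_lintegral_of_nonneg_ae (Filter.Eventually.of_forall (fun ω => hGnn _)) hGmeas]
    calc (∫⁻ ω, ENNReal.ofReal (exp (s * X0 ω^2) - s*X0 ω^2 - 1) ∂μ).toReal
        ≤ (ENNReal.ofReal (16*s^2*b^2)).toReal :=
          ENNReal.toReal_mono ENNReal.ofReal_ne_top hlint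
      _ = 16*s^2*b^2 := ENNReal.toReal_ofReal (by positivity)
  calc ∫ ω, exp (s * X0 ω^2) ∂μ
      = ∫ ω, ((exp (s * X0 ω^2) - s*X0 ω^2 - 1) + (s * X0 ω^2 + 1)) ∂μ := by rw [← hdecomp]
    _ = (∫ ω, (exp (s * X0 ω^2) - s*X0 ω^2 - 1) ∂μ) + (∫ ω, (s * X0 ω^2 + 1) ∂μ) := by
        rw [integral_add hGint hg1]
    _ ≤ 16*s^2*b^2 + (s * (∫ ω, X0 ω^2 ∂μ) + 1) := by
        have h2 : ∫ ω, (s * X0 ω^2 + 1) ∂μ = s * (∫ ω, X0 ω^2 ∂μ) + 1 := by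
          rw [integral_add (hint2.const_mul s) (integrable_const 1), integral_const_mul]
          simp
        rw [h2]
        linarith [hGle]
    _ = 1 + s * (∫ ω, X0 ω^2 ∂μ) + 16*s^2*b^2 := by ring

lemma exp_sq_lower (hm0 : Measurable X0)
    (hint2 : Integrable (fun ω => X0 ω^2) μ)
    (hint4 : Integrable (fun ω => (X0 ω^2)^2) μ)
    (hm4 : ∫ ω, (X0 ω^2)^2 ∂μ ≤ 16*b^2)
    {s : ℝ} (hs : 0 < s) :
    Integrable (fun ω => exp ((-s) * X0 ω^2)) μ ∧
    ∫ ω, exp ((-s) * X0 ω^2) ∂μ ≤ 1 - s * (∫ ω, X0 ω^2 ∂μ) + 8*s^2*b^2 := by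
  have hmeas : AEStronglyMeasurable (fun ω => exp ((-s) * X0 ω^2)) μ :=
    (((hm0.pow_const 2).const_mul (-s)).exp).aestronglyMeasurable
  have hint' : Integrable (fun ω => exp ((-s) * X0 ω^2)) μ := by
    refine Integrable.mono' (integrable_const 1) hmeas ?_
    filter_upwards with ω
    rw [Real.norm_eq_abs, abs_of_nonneg (exp_nonneg _)]
    apply exp_le_one_iff.mpr
    have : 0 ≤ s * X0 ω^2 := by positivity
    linarith
  refine ⟨hint', ?_⟩
  have hRHSint : Integrable (fun ω => 1 - s * X0 ω^2 + s^2/2 * (X0 ω^2)^2) μ := by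
    simpa [Pi.add_def, Pi.sub_def] using ((integrable_const (1:ℝ)).sub (hint2.const_mul s)).add (hint4.const_mul (s^2/2))
  have hpw : ∀ ω, exp ((-s) * X0 ω^2) ≤ 1 - s * X0 ω^2 + s^2/2 * (X0 ω^2)^2 := by
    intro ω
    have hz : 0 ≤ s * X0 ω^2 := by positivity
    have := pw_exp_neg_le hz
    rw [show (-s) * X0 ω^2 = -(s * X0 ω^2) by ring]
    nlinarith
  calc ∫ ω, exp ((-s) * X0 ω^2) ∂μ
      ≤ ∫ ω, (1 - s * X0 ω^2 + s^2/2 * (X0 ω^2)^2) ∂μ := integral_mono hint' hRHSint hpw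
    _ = (∫ ω, (1:ℝ) ∂μ) - s * (∫ ω, X0 ω^2 ∂μ) + s^2/2 * (∫ ω, (X0 ω^2)^2 ∂μ) := by
        have hsub1 : Integrable (fun ω => 1 - s * X0 ω^2) μ := by
          simpa [Pi.sub_def] using (integrable_const (1:ℝ)).sub (hint2.const_mul s)
        rw [integral_add hsub1 (hint4.const_mul (s^2/2)),
          integral_sub (integrable_const 1) (hint2.const_mul s), integral_const_mul,
          integral_const_mul]
    _ ≤ 1 - s * (∫ ω, X0 ω^2 ∂μ) + 8*s^2*b^2 := by
        have h3 : ∫ ω, (1:ℝ) ∂μ = 1 := by simp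
        rw [h3]
        nlinarith [sq_nonneg s]

end aux3

lemma exp_le_one_add_sq {x : ℝ} (h0 : 0 ≤ x) (h1 : x ≤ 1) : exp x ≤ 1 + x + x^2 := by
  have h := Real.exp_bound (x := x) (by rwa [abs_of_nonneg h0]) (n := 2) (by norm_num)
  have hsum : ∑ m ∈ Finset.range 2, x^m/(m.factorial:ℝ) = 1 + x := by
    simp [Finset.sum_range_succ]
  rw [hsum] at h
  have h2 := le_of_abs_le h
  norm_num [Nat.factorial] at h2
  nlinarith [sq_nonneg x]

section chernoff
variable {Ω : Type*} {mΩ : MeasurableSpace Ω} {μ : Measure Ω} [IsProbabilityMeasure μ]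

lemma chernoff_ub {n : ℕ} {Y : Fin n → Ω → ℝ} {Y0 : Ω → ℝ}
    (hYm : ∀ i, Measurable (Y i))
    (hYindep : iIndepFun Y μ)
    (hYid : ∀ i, IdentDistrib (Y i) Y0 μ μ)
    {t ε B : ℝ} (ht : 0 ≤ t)
    (hint : Integrable (fun ω => exp (t * Y0 ω)) μ)
    (hB : ∫ ω, exp (t * Y0 ω) ∂μ ≤ B) :
    (μ {ω | ε ≤ ∑ i, Y i ω}).toReal ≤ exp (-t*ε) * B^n := by
  have hu : Measurable (fun x : ℝ => exp (t * x)) := (measurable_id.const_mul t).exp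
  have hid' : ∀ i, IdentDistrib (fun ω => exp (t * Y i ω)) (fun ω => exp (t * Y0 ω)) μ μ :=
    fun i => (hYid i).comp hu
  have hint_i : ∀ i, Integrable (fun ω => exp (t * Y i ω)) μ :=
    fun i => (hid' i).integrable_iff.mpr hint
  have hInn : 0 ≤ ∫ ω, exp (t * Y0 ω) ∂μ := integral_nonneg fun ω => exp_nonneg _
  have hprod : mgf (∑ i, Y i) μ t ≤ B^n := by
    rw [hYindep.mgf_sum hYm Finset.univ]
    have heach : ∀ i : Fin n, mgf (Y i) μ t = ∫ ω, exp (t * Y0 ω) ∂μ :=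
      fun i => (hid' i).integral_eq
    calc ∏ i, mgf (Y i) μ t = ∏ _i : Fin n, ∫ ω, exp (t * Y0 ω) ∂μ :=
          Finset.prod_congr rfl (fun i _ => heach i)
      _ = (∫ ω, exp (t * Y0 ω) ∂μ)^n := by
          rw [Finset.prod_const, Finset.card_univ, Fintype.card_fin]
      _ ≤ B^n := pow_le_pow_left₀ hInn hB n
  have h := measure_ge_le_exp_mul_mgf (μ := μ) (X := ∑ i, Y i) ε ht
    (hYindep.integrable_exp_mul_sum hYm (fun i _ => hint_i i))
  have hset : {ω | ε ≤ (∑ i, Y i) ω} = {ω | ε ≤ ∑ i, Y i ω} := by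
    simp only [Finset.sum_apply]
  rw [hset] at h
  calc (μ {ω | ε ≤ ∑ i, Y i ω}).toReal ≤ exp (-t*ε) * mgf (∑ i, Y i) μ t := h
    _ ≤ exp (-t*ε) * B^n := mul_le_mul_of_nonneg_left hprod (exp_nonneg _)

lemma chernoff_lb {n : ℕ} {Y : Fin n → Ω → ℝ} {Y0 : Ω → ℝ}
    (hYm : ∀ i, Measurable (Y i))
    (hYindep : iIndepFun Y μ)
    (hYid : ∀ i, IdentDistrib (Y i) Y0 μ μ)
    {t ε B : ℝ} (ht : t ≤ 0)
    (hint : Integrable (fun ω => exp (t * Y0 ω)) μ)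
    (hB : ∫ ω, exp (t * Y0 ω) ∂μ ≤ B) :
    (μ {ω | ∑ i, Y i ω ≤ ε}).toReal ≤ exp (-t*ε) * B^n := by
  have hu : Measurable (fun x : ℝ => exp (t * x)) := (measurable_id.const_mul t).exp
  have hid' : ∀ i, IdentDistrib (fun ω => exp (t * Y i ω)) (fun ω => exp (t * Y0 ω)) μ μ :=
    fun i => (hYid i).comp hu
  have hint_i : ∀ i, Integrable (fun ω => exp (t * Y i ω)) μ :=
    fun i => (hid' i).integrable_iff.mpr hint
  have hInn : 0 ≤ ∫ ω, exp (t * Y0 ω) ∂μ := integral_nonneg fun ω => exp_nonneg _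
  have hprod : mgf (∑ i, Y i) μ t ≤ B^n := by
    rw [hYindep.mgf_sum hYm Finset.univ]
    have heach : ∀ i : Fin n, mgf (Y i) μ t = ∫ ω, exp (t * Y0 ω) ∂μ :=
      fun i => (hid' i).integral_eq
    calc ∏ i, mgf (Y i) μ t = ∏ _i : Fin n, ∫ ω, exp (t * Y0 ω) ∂μ :=
          Finset.prod_congr rfl (fun i _ => heach i)
      _ = (∫ ω, exp (t * Y0 ω) ∂μ)^n := by
          rw [Finset.prod_const, Finset.card_univ, Fintype.card_fin]
      _ ≤ B^n := pow_le_pow_left₀ hInn hB n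
  have h := measure_le_le_exp_mul_mgf (μ := μ) (X := ∑ i, Y i) ε ht
    (hYindep.integrable_exp_mul_sum hYm (fun i _ => hint_i i))
  have hset : {ω | (∑ i, Y i) ω ≤ ε} = {ω | ∑ i, Y i ω ≤ ε} := by
    simp only [Finset.sum_apply]
  rw [hset] at h
  calc (μ {ω | ∑ i, Y i ω ≤ ε}).toReal ≤ exp (-t*ε) * mgf (∑ i, Y i) μ t := h
    _ ≤ exp (-t*ε) * B^n := mul_le_mul_of_nonneg_left hprod (exp_nonneg _)

lemma var_le_two {X0 : Ω → ℝ} {b : ℝ} (hb : 0 < b)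
    (hsg : ∀ l : ℝ, Integrable (fun ω => exp (l * X0 ω)) μ ∧
      ∫ ω, exp (l * X0 ω) ∂μ ≤ exp (l ^ 2 * b / 2))
    (hint2 : Integrable (fun ω => X0 ω^2) μ) :
    ∫ ω, X0 ω^2 ∂μ ≤ 2*b := by
  by_contra hcon
  push_neg at hcon
  set v := ∫ ω, X0 ω^2 ∂μ with hv
  have hvpos : 2*b < v := hcon
  set u := min ((v - 2*b)/(2*b^2)) (1/b) with hu
  have hu0 : 0 < u := lt_min (div_pos (by linarith) (by positivity)) (by positivity)
  set l := Real.sqrt u with hl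
  have hl2 : l^2 = u := Real.sq_sqrt hu0.le
  -- integral comparison
  have hLHSint : Integrable (fun ω => 2 + l^2/2 * X0 ω^2) μ := by
    simpa using (integrable_const (2:ℝ)).add (hint2.const_mul (l^2/2))
  have hRHSint : Integrable (fun ω => exp (l * X0 ω) + exp (-(l * X0 ω))) μ := by
    have := (hsg l).1.add ((hsg (-l)).1)
    simpa [neg_mul, Pi.add_def] using this
  have hmono : ∫ ω, (2 + l^2/2 * X0 ω^2) ∂μ ≤ ∫ ω, (exp (l * X0 ω) + exp (-(l * X0 ω))) ∂μ := by
    apply integral_mono hLHSint hRHSint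
    intro ω
    have := pw_cosh (l * X0 ω)
    have hsq : (l * X0 ω)^2 = l^2 * X0 ω^2 := by ring
    simp only []
    nlinarith
  have hL : ∫ ω, (2 + l^2/2 * X0 ω^2) ∂μ = 2 + l^2/2 * v := by
    rw [integral_add (integrable_const 2) (hint2.const_mul (l^2/2)), integral_const_mul]
    simp [hv]
  have hR : ∫ ω, (exp (l * X0 ω) + exp (-(l * X0 ω))) ∂μ ≤ 2 * exp (l^2 * b/2) := by
    have he : ∫ ω, exp (-(l * X0 ω)) ∂μ = ∫ ω, exp ((-l) * X0 ω) ∂μ := by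
      congr 1; funext ω; rw [neg_mul]
    rw [integral_add (hsg l).1 (by simpa [neg_mul] using (hsg (-l)).1), he]
    have h1 := (hsg l).2
    have h2 := (hsg (-l)).2
    rw [show (-l)^2 = l^2 by ring] at h2
    linarith
  have hkey : 2 + u/2 * v ≤ 2 * exp (u * b/2) := by
    rw [← hl2]
    calc 2 + l^2/2 * v = ∫ ω, (2 + l^2/2 * X0 ω^2) ∂μ := hL.symm
      _ ≤ ∫ ω, (exp (l * X0 ω) + exp (-(l * X0 ω))) ∂μ := hmono
      _ ≤ 2 * exp (l^2 * b/2) := hR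
    -- note l^2/2 * v = l^2 * v / 2? shapes
  -- now numeric contradiction
  have hub : u * b / 2 ≤ 1 := by
    have h1 : u ≤ 1/b := min_le_right _ _
    have := mul_le_mul_of_nonneg_right h1 hb.le
    rw [one_div_mul_cancel hb.ne'] at this
    linarith
  have hexp : exp (u*b/2) ≤ 1 + u*b/2 + (u*b/2)^2 :=
    exp_le_one_add_sq (by positivity) hub
  have hu1 : u ≤ (v - 2*b)/(2*b^2) := min_le_left _ _
  have hu2 : u * (2*b^2) ≤ v - 2*b := by
    have := mul_le_mul_of_nonneg_right hu1 (by positivity : (0:ℝ) ≤ 2*b^2)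
    rwa [div_mul_cancel₀ _ (by positivity : (2:ℝ)*b^2 ≠ 0)] at this
  have hEe : u * (v - 2*b - u*b^2) ≤ 0 := by nlinarith [hkey, hexp]
  have hE : v - 2*b ≤ u*b^2 := by
    by_contra hE'
    push_neg at hE'
    nlinarith [mul_pos hu0 (show (0:ℝ) < v - 2*b - u*b^2 by linarith)]
  linarith

end chernoff

lemma final_num {T : ℕ} (hT : 2 ≤ T) {a : ℝ} (ha : a ≤ -(2*Real.log (2*(T:ℝ)))) :
    exp a ≤ 1/(4*(T:ℝ)^2) := by
  have hT' : (2:ℝ) ≤ (T:ℝ) := by exact_mod_cast hT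
  have hTpos : (0:ℝ) < 2*(T:ℝ) := by linarith
  have h1 : exp a ≤ exp (-(2*Real.log (2*(T:ℝ)))) := exp_le_exp.mpr ha
  have h2 : exp (-(2*Real.log (2*(T:ℝ)))) = 1/(4*(T:ℝ)^2) := by
    rw [exp_neg, show 2*Real.log (2*(T:ℝ)) = Real.log (2*(T:ℝ)) + Real.log (2*(T:ℝ)) by ring,
      exp_add, exp_log hTpos]
    rw [one_div]
    congr 1
    ring
  linarith [h2 ▸ h1]

lemma rate_ge {K L r n : ℝ} (hn : K*L ≤ n) (hKr : 2 ≤ K*r) (hr : 0 ≤ r) (hL : 0 ≤ L)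
    (hK : 0 < K) : 2*L ≤ n*r := by nlinarith

set_option maxHeartbeats 2000000 in
/-- With `n = ⌈(72κ⁴/(cσ⁴)) log(2T)⌉` samples, the empirical variance is within a factor
`1/2` of the true variance `σ²` with probability at least `1 − 1/T²`. -/
theorem stmt10 {Ω : Type*} {mΩ : MeasurableSpace Ω} (μ : Measure Ω) [IsProbabilityMeasure μ]
    (T : ℕ) (hT : 2 ≤ T)
    (κ σ : ℝ) (hκ : 0 < κ) (hσ : 0 < σ)
    (c : ℝ) (hc : c = (exp 1 - 1) / (2 * exp 1 * (2 * exp 1 - 1)))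
    (n : ℕ) (hn : n = ⌈72 * κ ^ 4 / (c * σ ^ 4) * Real.log (2 * T)⌉₊)
    (X : Fin n → Ω → ℝ) (X0 : Ω → ℝ)
    (hmeas : ∀ i, Measurable (X i)) (hm0 : Measurable X0)
    (hindep : iIndepFun X μ)
    (hid : ∀ i, IdentDistrib (X i) X0 μ μ)
    (hcent : ∫ ω, X0 ω ∂μ = 0)
    (hsg : ∀ l : ℝ, Integrable (fun ω => exp (l * X0 ω)) μ ∧
      ∫ ω, exp (l * X0 ω) ∂μ ≤ exp (l ^ 2 * κ ^ 2 / 2))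
    (hvar : ∫ ω, X0 ω ^ 2 ∂μ = σ ^ 2) :
    ENNReal.ofReal (1 - 1 / (T : ℝ) ^ 2) ≤
      μ {ω | |((1 / n : ℝ) * ∑ i, X i ω ^ 2 - ((1 / n : ℝ) * ∑ i, X i ω) ^ 2) - σ ^ 2| ≤
          σ ^ 2 / 2 ∧
        σ ^ 2 / 2 ≤ (1 / n : ℝ) * ∑ i, X i ω ^ 2 - ((1 / n : ℝ) * ∑ i, X i ω) ^ 2 ∧
        (1 / n : ℝ) * ∑ i, X i ω ^ 2 - ((1 / n : ℝ) * ∑ i, X i ω) ^ 2 ≤ 3 * σ ^ 2 / 2} := by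
  -- basic constants
  have he1 : (2.7182818283:ℝ) < exp 1 := exp_one_gt_d9
  have he2 : exp 1 < 2.7182818286 := exp_one_lt_d9
  have hden : (0:ℝ) < 2 * exp 1 * (2 * exp 1 - 1) := by nlinarith
  have hcpos : 0 < c := by rw [hc]; apply div_pos (by nlinarith) hden
  have hcle : c ≤ 729/6400 := by
    rw [hc, div_le_iff₀ hden]; nlinarith
  have hT' : (2:ℝ) ≤ (T:ℝ) := by exact_mod_cast hT
  have hlogpos : 0 < Real.log (2*(T:ℝ)) := Real.log_pos (by linarith)
  have hb : (0:ℝ) < κ^2 := by positivity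
  -- K and n
  set K : ℝ := 72 * κ ^ 4 / (c * σ ^ 4) with hK
  have hKpos : 0 < K := by rw [hK]; positivity
  have hnK : K * Real.log (2*(T:ℝ)) ≤ (n:ℝ) := by
    rw [hn]
    have := Nat.le_ceil (72 * κ ^ 4 / (c * σ ^ 4) * Real.log (2 * (T:ℕ)))
    push_cast at this ⊢
    exact this
  have hn0 : 0 < n := by
    rw [hn]
    apply Nat.ceil_pos.mpr
    push_cast
    positivity
  have hnpos : (0:ℝ) < (n:ℝ) := by exact_mod_cast hn0
  -- integrability of X0²
  have hint2 : Integrable (fun ω => X0 ω^2) μ := by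
    by_contra hni
    have h0 := integral_undef hni
    rw [hvar] at h0
    nlinarith
  -- variance ≤ 2κ²
  have hvle : σ^2 ≤ 2*κ^2 := by
    rw [← hvar]; exact var_le_two hb hsg hint2
  -- tail bound and moments
  have htail := fun (t : ℝ) (ht : 0 ≤ t) => tail_sq (μ := μ) (X0 := X0) hb hsg ht
  obtain ⟨hint4, hm4⟩ := moment4 (μ := μ) hm0 hb htail
  -- parameters
  set s : ℝ := 9*σ^2/(640*κ^4) with hs_def
  have hs : 0 < s := by rw [hs_def]; positivity
  have hs4 : s ≤ 1/(4*κ^2) := by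
    rw [hs_def, div_le_div_iff₀ (by positivity) (by positivity)]
    nlinarith
  set u : ℝ := Real.sqrt (σ^2/20) with hu_def
  have hu2 : u^2 = σ^2/20 := Real.sq_sqrt (by positivity)
  have hu0 : 0 < u := Real.sqrt_pos.mpr (by positivity)
  -- mgf bounds
  obtain ⟨hintU, hU⟩ := exp_sq_upper (μ := μ) hm0 hb htail hint2 hs hs4
  obtain ⟨hintL, hL⟩ := exp_sq_lower (μ := μ) hm0 hint2 hint4 hm4 hs
  rw [hvar] at hU hL
  have hBU : ∫ ω, exp (s * X0 ω^2) ∂μ ≤ exp (s*σ^2 + 16*s^2*(κ^2)^2) := by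
    have := add_one_le_exp (s*σ^2 + 16*s^2*(κ^2)^2)
    linarith
  have hBL : ∫ ω, exp ((-s) * X0 ω^2) ∂μ ≤ exp (-(s*σ^2) + 8*s^2*(κ^2)^2) := by
    have := add_one_le_exp (-(s*σ^2) + 8*s^2*(κ^2)^2)
    linarith
  -- independence/identdistrib for squares and negatives
  have hmsq : ∀ i, Measurable (fun ω => X i ω^2) := fun i => (hmeas i).pow_const 2
  have hisq : iIndepFun (fun i => fun ω => X i ω^2) μ :=
    hindep.comp (fun _ => fun x : ℝ => x^2) (fun _ => measurable_id.pow_const 2)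
  have hidsq : ∀ i, IdentDistrib (fun ω => X i ω^2) (fun ω => X0 ω^2) μ μ :=
    fun i => (hid i).comp (measurable_id.pow_const 2)
  have hmneg : ∀ i, Measurable (fun ω => -(X i ω)) := fun i => (hmeas i).neg
  have hineg : iIndepFun (fun i => fun ω => -(X i ω)) μ :=
    hindep.comp (fun _ => fun x : ℝ => -x) (fun _ => measurable_neg)
  have hidneg : ∀ i, IdentDistrib (fun ω => -(X i ω)) (fun ω => -(X0 ω)) μ μ :=
    fun i => (hid i).comp measurable_neg
  have hsgneg := hsg_neg (μ := μ) (X0 := X0) (b := κ^2) hsg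
  -- the four bad events
  set A1 : Set Ω := {ω | 29/20*σ^2*(n:ℝ) ≤ ∑ i, X i ω^2} with hA1_def
  set A2 : Set Ω := {ω | ∑ i, X i ω^2 ≤ 11/20*σ^2*(n:ℝ)} with hA2_def
  set A3 : Set Ω := {ω | (n:ℝ)*u ≤ ∑ i, X i ω} with hA3_def
  set A4 : Set Ω := {ω | (n:ℝ)*u ≤ ∑ i, -(X i ω)} with hA4_def
  -- bounds on each
  have key1 : μ A1 ≤ ENNReal.ofReal (1/(4*(T:ℝ)^2)) := by
    rw [ENNReal.le_ofReal_iff_toReal_le (measure_ne_top μ _) (by positivity)]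
    have h := chernoff_ub (μ := μ) hmsq hisq hidsq (t := s) (ε := 29/20*σ^2*(n:ℝ)) hs.le hintU hBU
    refine le_trans h ?_
    rw [← exp_nat_mul, ← exp_add]
    apply final_num hT
    have harith : -s * (29/20*σ^2*(n:ℝ)) + (n:ℝ) * (s*σ^2 + 16*s^2*(κ^2)^2)
        = -((n:ℝ) * (9/20*s*σ^2 - 16*s^2*κ^4)) := by ring
    rw [harith]
    have hr1eq : 9/20*s*σ^2 - 16*s^2*κ^4 = 81*σ^4/(25600*κ^4) := by
      rw [hs_def]; field_simp; ring
    have hr1 : (0:ℝ) ≤ 9/20*s*σ^2 - 16*s^2*κ^4 := by rw [hr1eq]; positivity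
    have hKr1 : 2 ≤ K * (9/20*s*σ^2 - 16*s^2*κ^4) := by
      have heq : K * (9/20*s*σ^2 - 16*s^2*κ^4) = 729/(3200*c) := by
        rw [hK, hs_def]; field_simp; ring
      rw [heq, le_div_iff₀ (by positivity)]
      nlinarith
    have := rate_ge hnK hKr1 hr1 hlogpos.le hKpos
    linarith
  have key2 : μ A2 ≤ ENNReal.ofReal (1/(4*(T:ℝ)^2)) := by
    rw [ENNReal.le_ofReal_iff_toReal_le (measure_ne_top μ _) (by positivity)]
    have h := chernoff_lb (μ := μ) hmsq hisq hidsq (t := -s) (ε := 11/20*σ^2*(n:ℝ))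
      (by linarith) hintL hBL
    refine le_trans h ?_
    rw [← exp_nat_mul, ← exp_add]
    apply final_num hT
    have harith : -(-s) * (11/20*σ^2*(n:ℝ)) + (n:ℝ) * (-(s*σ^2) + 8*s^2*(κ^2)^2)
        = -((n:ℝ) * (9/20*s*σ^2 - 8*s^2*κ^4)) := by ring
    rw [harith]
    have hr1eq : 9/20*s*σ^2 - 8*s^2*κ^4 = 243*σ^4/(51200*κ^4) := by
      rw [hs_def]; field_simp; ring
    have hr1 : (0:ℝ) ≤ 9/20*s*σ^2 - 8*s^2*κ^4 := by rw [hr1eq]; positivity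
    have hKr1 : 2 ≤ K * (9/20*s*σ^2 - 8*s^2*κ^4) := by
      have hKr0 : 2 ≤ K * (9/20*s*σ^2 - 16*s^2*κ^4) := by
        have heq : K * (9/20*s*σ^2 - 16*s^2*κ^4) = 729/(3200*c) := by
          rw [hK, hs_def]; field_simp; ring
        rw [heq, le_div_iff₀ (by positivity)]
        nlinarith
      have hmono : K * (9/20*s*σ^2 - 16*s^2*κ^4) ≤ K * (9/20*s*σ^2 - 8*s^2*κ^4) := by
        apply mul_le_mul_of_nonneg_left ?_ hKpos.le
        have h8 : (0:ℝ) ≤ s^2*κ^4 := by positivity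
        linarith
      linarith
    have := rate_ge hnK hKr1 hr1 hlogpos.le hKpos
    linarith
  have key34 : ∀ (Y : Fin n → Ω → ℝ) (Y0 : Ω → ℝ), (∀ i, Measurable (Y i)) →
      iIndepFun Y μ → (∀ i, IdentDistrib (Y i) Y0 μ μ) →
      (∀ l : ℝ, Integrable (fun ω => exp (l * Y0 ω)) μ ∧
        ∫ ω, exp (l * Y0 ω) ∂μ ≤ exp (l ^ 2 * κ ^ 2 / 2)) →
      μ {ω | (n:ℝ)*u ≤ ∑ i, Y i ω} ≤ ENNReal.ofReal (1/(4*(T:ℝ)^2)) := by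
    intro Y Y0 hYm hYi hYid hYsg
    rw [ENNReal.le_ofReal_iff_toReal_le (measure_ne_top μ _) (by positivity)]
    have h := chernoff_ub (μ := μ) hYm hYi hYid (t := u/κ^2) (ε := (n:ℝ)*u)
      (by positivity) (hYsg _).1 (hYsg _).2
    refine le_trans h ?_
    rw [← exp_nat_mul, ← exp_add]
    apply final_num hT
    have harith : -(u/κ^2) * ((n:ℝ)*u) + (n:ℝ) * ((u/κ^2) ^ 2 * κ ^ 2 / 2)
        = -((n:ℝ) * (u^2/(2*κ^2))) := by field_simp; ring
    rw [harith, hu2]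
    have hr3 : (0:ℝ) ≤ σ^2/20/(2*κ^2) := by positivity
    have hKr3 : 2 ≤ K * (σ^2/20/(2*κ^2)) := by
      have heq : K * (σ^2/20/(2*κ^2)) = 9*κ^2/(5*c*σ^2) := by
        rw [hK]; field_simp; ring
      rw [heq, le_div_iff₀ (by positivity)]
      nlinarith
    have := rate_ge hnK hKr3 hr3 hlogpos.le hKpos
    linarith
  have key3 : μ A3 ≤ ENNReal.ofReal (1/(4*(T:ℝ)^2)) :=
    key34 X X0 hmeas hindep hid hsg
  have key4 : μ A4 ≤ ENNReal.ofReal (1/(4*(T:ℝ)^2)) :=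
    key34 _ _ hmneg hineg hidneg hsgneg
  -- union bound
  have hunion : μ (A1 ∪ A2 ∪ A3 ∪ A4) ≤ ENNReal.ofReal (1/(T:ℝ)^2) := by
    calc μ (A1 ∪ A2 ∪ A3 ∪ A4) ≤ μ (A1 ∪ A2 ∪ A3) + μ A4 := measure_union_le _ _
      _ ≤ (μ (A1 ∪ A2) + μ A3) + μ A4 := by gcongr; exact measure_union_le _ _
      _ ≤ ((μ A1 + μ A2) + μ A3) + μ A4 := by gcongr; exact measure_union_le _ _
      _ ≤ ((ENNReal.ofReal (1/(4*(T:ℝ)^2)) + ENNReal.ofReal (1/(4*(T:ℝ)^2)))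
          + ENNReal.ofReal (1/(4*(T:ℝ)^2))) + ENNReal.ofReal (1/(4*(T:ℝ)^2)) := by
          gcongr
      _ = ENNReal.ofReal (1/(T:ℝ)^2) := by
          rw [← ENNReal.ofReal_add (by positivity) (by positivity),
            ← ENNReal.ofReal_add (by positivity) (by positivity),
            ← ENNReal.ofReal_add (by positivity) (by positivity)]
          congr 1
          field_simp
          ring
  -- measurability of the union
  have hmU : MeasurableSet (A1 ∪ A2 ∪ A3 ∪ A4) := by
    have hS2 : Measurable (fun ω => ∑ i, X i ω^2) := by
      apply Finset.measurable_sum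
      intro i _
      exact (hmeas i).pow_const 2
    have hS1 : Measurable (fun ω => ∑ i, X i ω) := by
      apply Finset.measurable_sum
      intro i _
      exact hmeas i
    have hS1' : Measurable (fun ω => ∑ i, -(X i ω)) := by
      apply Finset.measurable_sum
      intro i _
      exact (hmeas i).neg
    exact (((measurableSet_le measurable_const hS2).union
      (measurableSet_le hS2 measurable_const)).union
      (measurableSet_le measurable_const hS1)).union
      (measurableSet_le measurable_const hS1')
  -- inclusion
  have hsub : (A1 ∪ A2 ∪ A3 ∪ A4)ᶜ ⊆
      {ω | |((1 / n : ℝ) * ∑ i, X i ω ^ 2 - ((1 / n : ℝ) * ∑ i, X i ω) ^ 2) - σ ^ 2| ≤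
          σ ^ 2 / 2 ∧
        σ ^ 2 / 2 ≤ (1 / n : ℝ) * ∑ i, X i ω ^ 2 - ((1 / n : ℝ) * ∑ i, X i ω) ^ 2 ∧
        (1 / n : ℝ) * ∑ i, X i ω ^ 2 - ((1 / n : ℝ) * ∑ i, X i ω) ^ 2 ≤ 3 * σ ^ 2 / 2} := by
    intro ω hω
    simp only [Set.mem_compl_iff, Set.mem_union, not_or, hA1_def, hA2_def, hA3_def, hA4_def,
      Set.mem_setOf_eq, not_le] at hω
    obtain ⟨⟨⟨h1, h2⟩, h3⟩, h4⟩ := hω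
    have h4' : -(∑ i, X i ω) < (n:ℝ)*u := by
      rw [← Finset.sum_neg_distrib]
      exact h4
    set S2 := ∑ i, X i ω^2 with hS2d
    set S1 := ∑ i, X i ω with hS1d
    have hV2a : (1/n : ℝ) * S2 ≤ 29/20*σ^2 := by
      rw [show (1/(n:ℝ)) * S2 = S2/(n:ℝ) by ring, div_le_iff₀ hnpos]
      nlinarith
    have hV2b : 11/20*σ^2 ≤ (1/n : ℝ) * S2 := by
      rw [show (1/(n:ℝ)) * S2 = S2/(n:ℝ) by ring, le_div_iff₀ hnpos]
      nlinarith
    have hV1 : ((1/n : ℝ) * S1)^2 ≤ σ^2/20 := by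
      have habs : |S1| ≤ (n:ℝ)*u := by
        rw [abs_le]
        constructor <;> nlinarith
      have : ((1/n : ℝ) * S1)^2 = S1^2/(n:ℝ)^2 := by field_simp
      rw [this, div_le_iff₀ (by positivity)]
      have h5 : S1^2 ≤ ((n:ℝ)*u)^2 := by
        rw [← sq_abs S1]
        apply pow_le_pow_left₀ (abs_nonneg _) habs
      calc S1^2 ≤ ((n:ℝ)*u)^2 := h5
        _ = u^2 * (n:ℝ)^2 := by ring
        _ = σ^2/20 * (n:ℝ)^2 := by rw [hu2]
    have hV1nn : 0 ≤ ((1/n : ℝ) * S1)^2 := sq_nonneg _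
    have habs : |((1 / n : ℝ) * S2 - ((1 / n : ℝ) * S1) ^ 2) - σ ^ 2| ≤ σ ^ 2 / 2 := by
      rw [abs_le]
      constructor <;> nlinarith
    have hrange := abs_le.mp habs
    exact ⟨habs, by linarith [hrange.1], by linarith [hrange.2]⟩
  -- conclude
  have hcompl : μ ((A1 ∪ A2 ∪ A3 ∪ A4)ᶜ) = 1 - μ (A1 ∪ A2 ∪ A3 ∪ A4) :=
    prob_compl_eq_one_sub hmU
  have hT2a : (0:ℝ) ≤ 1/(T:ℝ)^2 := by positivity
  have hT2b : 1/(T:ℝ)^2 ≤ 1 := by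
    rw [div_le_one (by positivity)]
    nlinarith
  calc ENNReal.ofReal (1 - 1 / (T : ℝ) ^ 2)
      = 1 - ENNReal.ofReal (1/(T:ℝ)^2) := by
        rw [ENNReal.ofReal_sub _ hT2a, ENNReal.ofReal_one]
    _ ≤ 1 - μ (A1 ∪ A2 ∪ A3 ∪ A4) := tsub_le_tsub_left hunion 1
    _ = μ ((A1 ∪ A2 ∪ A3 ∪ A4)ᶜ) := hcompl.symm
    _ ≤ _ := measure_mono hsub
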